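/- Let H, K, J be subgroups of the free group F_k. If H is a free factor of J and K ≤ J, then H ∩ K is a free factor of K. -/

import Mathlib

/-- `H` is a free factor of `J`: there is a subgroup `H' ≤ J` such that `J` is the
internal free product of `H` and `H'`, i.e. the homomorphism from the (external)
free product `H ∗ H'` induced by the inclusions is injective with range `J`. -/
def IsFreeFactor {F : Type*} [Group F] (H J : Subgroup F) : Prop :=
  H ≤ J ∧ ∃ H' : Subgroup F, H' ≤ J ∧
    Function.Injective (Monoid.Coprod.lift H.subtype H'.subtype) ∧
    (Monoid.Coprod.lift H.subtype H'.subtype).range = J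

namespace FFP

open Monoid Function

variable {α β : Type*}

/-- canonical hom from the coproduct of free groups to the free group on the sum. -/
def toSum : Coprod (FreeGroup α) (FreeGroup β) →* FreeGroup (α ⊕ β) :=
  Coprod.lift (FreeGroup.map Sum.inl) (FreeGroup.map Sum.inr)

def ofSum : FreeGroup (α ⊕ β) →* Coprod (FreeGroup α) (FreeGroup β) :=
  FreeGroup.lift (Sum.elim (fun a => Coprod.inl (FreeGroup.of a))
    (fun b => Coprod.inr (FreeGroup.of b)))

lemma toSum_ofSum : (toSum (α := α) (β := β)).comp ofSum = MonoidHom.id _ := by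
  apply FreeGroup.ext_hom; rintro (a | b) <;> simp [toSum, ofSum]

lemma ofSum_toSum : (ofSum (α := α) (β := β)).comp toSum = MonoidHom.id _ := by
  apply Coprod.hom_ext <;> rw [MonoidHom.comp_assoc] <;>
    apply FreeGroup.ext_hom <;> intro x <;>
    simp [toSum, ofSum]

lemma toSum_bijective : Bijective (toSum (α := α) (β := β)) := by
  constructor
  · intro x y h
    have := congrArg ofSum h
    calc x = (ofSum.comp toSum) x := by rw [ofSum_toSum]; rfl
    _ = (ofSum.comp toSum) y := this
    _ = y := by rw [ofSum_toSum]; rfl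
  · intro x
    exact ⟨ofSum x, by
      have := congrFun (congrArg DFunLike.coe (toSum_ofSum (α := α) (β := β))) x
      simpa using this⟩

lemma map_surjective {M N M' N' : Type*} [Group M] [Group N] [Group M'] [Group N']
    (f : M →* M') (g : N →* N') (hf : Surjective f) (hg : Surjective g) :
    Surjective (Coprod.map f g) := by
  intro x
  induction x using Coprod.induction_on with
  | inl m => obtain ⟨y, rfl⟩ := hf m; exact ⟨Coprod.inl y, by simp⟩
  | inr n => obtain ⟨y, rfl⟩ := hg n; exact ⟨Coprod.inr y, by simp⟩
  | mul x y hx hy =>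
      obtain ⟨a, rfl⟩ := hx; obtain ⟨b, rfl⟩ := hy; exact ⟨a * b, by simp⟩

lemma inj_of_comp {M N P : Type*} [Group M] [Group N] [Group P]
    {L : N →* P} {m : M →* N} (hm : Surjective m) (h : Injective (L.comp m)) :
    Injective L := by
  intro x y hxy
  obtain ⟨a, rfl⟩ := hm x; obtain ⟨b, rfl⟩ := hm y
  exact congrArg m (h hxy)

lemma range_comp_of_surjective {M N P : Type*} [Group M] [Group N] [Group P]
    (L : N →* P) (m : M →* N) (hm : Surjective m) : (L.comp m).range = L.range := by
  rw [MonoidHom.range_comp, MonoidHom.range_eq_top.mpr hm, ← MonoidHom.range_eq_map]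

/-- A partition of a basis of a free group gives a free factor. -/
theorem isFreeFactor_of_basis_sum {F : Type*} [Group F]
    (f : FreeGroup (α ⊕ β) →* F) (hf : Injective f) :
    IsFreeFactor (f.comp (FreeGroup.map Sum.inl)).range f.range := by
  have hintoA : Injective (FreeGroup.map (@Sum.inl α β)) := by
    have : (FreeGroup.lift (Sum.elim FreeGroup.of (fun _ => 1))).comp
        (FreeGroup.map (@Sum.inl α β)) = MonoidHom.id _ := by
      apply FreeGroup.ext_hom; intro x; simp
    intro x y hxy
    have h2 := congrArg (FreeGroup.lift (Sum.elim FreeGroup.of (fun _ => 1))) hxy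
    calc x = ((FreeGroup.lift (Sum.elim FreeGroup.of (fun _ => 1))).comp
        (FreeGroup.map (@Sum.inl α β))) x := by rw [this]; rfl
    _ = ((FreeGroup.lift (Sum.elim FreeGroup.of (fun _ => 1))).comp
        (FreeGroup.map (@Sum.inl α β))) y := h2
    _ = y := by rw [this]; rfl
  have hintoB : Injective (FreeGroup.map (@Sum.inr α β)) := by
    have : (FreeGroup.lift (Sum.elim (fun _ => (1 : FreeGroup β)) FreeGroup.of)).comp
        (FreeGroup.map (@Sum.inr α β)) = MonoidHom.id _ := by
      apply FreeGroup.ext_hom; intro x; simp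
    intro x y hxy
    have h2 := congrArg (FreeGroup.lift (Sum.elim (fun _ => (1 : FreeGroup β)) FreeGroup.of)) hxy
    calc x = ((FreeGroup.lift (Sum.elim (fun _ => (1:FreeGroup β)) FreeGroup.of)).comp
        (FreeGroup.map (@Sum.inr α β))) x := by rw [this]; rfl
    _ = ((FreeGroup.lift (Sum.elim (fun _ => (1:FreeGroup β)) FreeGroup.of)).comp
        (FreeGroup.map (@Sum.inr α β))) y := h2
    _ = y := by rw [this]; rfl
  set A := (f.comp (FreeGroup.map Sum.inl)).range with hA
  set B := (f.comp (FreeGroup.map Sum.inr)).range with hB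
  have hAinj : Injective (f.comp (FreeGroup.map Sum.inl)) := hf.comp hintoA
  have hBinj : Injective (f.comp (FreeGroup.map Sum.inr)) := hf.comp hintoB
  have hAle : A ≤ f.range := by rintro x ⟨y, rfl⟩; exact ⟨FreeGroup.map Sum.inl y, rfl⟩
  have hBle : B ≤ f.range := by rintro x ⟨y, rfl⟩; exact ⟨FreeGroup.map Sum.inr y, rfl⟩
  refine ⟨hAle, B, hBle, ?_, ?_⟩
  all_goals {
    have key : (Coprod.lift A.subtype B.subtype).comp
        (Coprod.map (f.comp (FreeGroup.map Sum.inl)).rangeRestrict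
          (f.comp (FreeGroup.map Sum.inr)).rangeRestrict) = f.comp toSum := by
      apply Coprod.hom_ext <;> ext x <;> rfl
    have hsurj := map_surjective _ _
      (MonoidHom.rangeRestrict_surjective (f.comp (FreeGroup.map Sum.inl)))
      (MonoidHom.rangeRestrict_surjective (f.comp (FreeGroup.map Sum.inr)))
    first
    | exact inj_of_comp hsurj (key ▸ hf.comp toSum_bijective.1)
    | rw [← range_comp_of_surjective _ _ hsurj, key,
        range_comp_of_surjective _ _ toSum_bijective.2]
  }

/-- `IsFreeFactor` transfers along injective homomorphisms. -/
theorem IsFreeFactor.map {F F' : Type*} [Group F] [Group F'] {A B : Subgroup F}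
    (h : IsFreeFactor A B) (φ : F →* F') (hφ : Injective φ) :
    IsFreeFactor (A.map φ) (B.map φ) := by
  obtain ⟨hAB, B', hB'B, hinj, hrange⟩ := h
  refine ⟨Subgroup.map_mono hAB, B'.map φ, Subgroup.map_mono hB'B, ?_, ?_⟩
  all_goals {
    have key : (Coprod.lift (A.map φ).subtype (B'.map φ).subtype).comp
        (Coprod.map (A.equivMapOfInjective φ hφ).toMonoidHom
          (B'.equivMapOfInjective φ hφ).toMonoidHom) =
        φ.comp (Coprod.lift A.subtype B'.subtype) := by
      apply Coprod.hom_ext <;> ext x <;>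
        simp [Subgroup.coe_equivMapOfInjective_apply]
    have s1 : Surjective ⇑(A.equivMapOfInjective φ hφ).toMonoidHom :=
      (A.equivMapOfInjective φ hφ).surjective
    have s2 : Surjective ⇑(B'.equivMapOfInjective φ hφ).toMonoidHom :=
      (B'.equivMapOfInjective φ hφ).surjective
    have hsurj := map_surjective _ _ s1 s2
    first
    | exact inj_of_comp hsurj (key ▸ hφ.comp hinj)
    | rw [← range_comp_of_surjective _ _ hsurj, key, MonoidHom.range_comp, hrange]
  }

lemma ofSum_bijective {α β : Type*} : Bijective (ofSum (α := α) (β := β)) := by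
  constructor
  · intro x y h
    have h2 := congrArg toSum h
    calc x = (toSum.comp ofSum) x := by rw [toSum_ofSum]; rfl
    _ = (toSum.comp ofSum) y := h2
    _ = y := by rw [toSum_ofSum]; rfl
  · intro x
    exact ⟨toSum x, by
      have := congrFun (congrArg DFunLike.coe (ofSum_toSum (α := α) (β := β))) x
      simpa using this⟩

lemma map_equiv_bijective {M N M' N' : Type*} [Group M] [Group N] [Group M'] [Group N']
    (f : M ≃* M') (g : N ≃* N') :
    Bijective (Coprod.map f.toMonoidHom g.toMonoidHom) := by
  constructor
  · have hcomp : (Coprod.map f.symm.toMonoidHom g.symm.toMonoidHom).comp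
        (Coprod.map f.toMonoidHom g.toMonoidHom) = MonoidHom.id _ := by
      rw [Coprod.map_comp_map]
      have h1 : f.symm.toMonoidHom.comp f.toMonoidHom = MonoidHom.id M := by ext x; simp
      have h2 : g.symm.toMonoidHom.comp g.toMonoidHom = MonoidHom.id N := by ext x; simp
      rw [h1, h2, Coprod.map_id_id]
    intro x y hxy
    calc x = (Coprod.map f.symm.toMonoidHom g.symm.toMonoidHom)
          ((Coprod.map f.toMonoidHom g.toMonoidHom) x) := by
            rw [← MonoidHom.comp_apply, hcomp]; rfl
    _ = (Coprod.map f.symm.toMonoidHom g.symm.toMonoidHom)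
          ((Coprod.map f.toMonoidHom g.toMonoidHom) y) := by rw [hxy]
    _ = y := by rw [← MonoidHom.comp_apply, hcomp]; rfl
  · exact map_surjective _ _ f.surjective g.surjective

end FFP


noncomputable section

open scoped Classical

open CategoryTheory CategoryTheory.ActionCategory Quiver IsFreeGroupoid
open MulAction SemidirectProduct Function

universe u

namespace FFP2

/-- Generalization of `Quiver.arborescenceMk` to well-ordered heights. -/
noncomputable def arbMk {V : Type*} [Quiver V] {W : Type*} [LinearOrder W] [WellFoundedLT W]
    (r : V) (height : V → W)
    (height_lt : ∀ ⦃a b⦄, (a ⟶ b) → height a < height b)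
    (unique_arrow : ∀ ⦃a b c : V⦄ (e : a ⟶ c) (f : b ⟶ c), a = b ∧ HEq e f)
    (root_or_arrow : ∀ b, b = r ∨ ∃ a, Nonempty (a ⟶ b)) : Quiver.Arborescence V where
  root := r
  uniquePath b := by
    have ex : ∀ w : W, ∀ b : V, height b = w → Nonempty (Quiver.Path r b) := by
      intro w
      induction w using WellFoundedLT.induction with
      | _ w ih =>
        intro b hw
        rcases root_or_arrow b with rfl | ⟨a, ⟨e⟩⟩
        · exact ⟨Path.nil⟩
        · rcases ih (height a) (hw ▸ height_lt e) a rfl with ⟨p⟩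
          exact ⟨p.cons e⟩
    have height_le : ∀ {a b}, Quiver.Path a b → height a ≤ height b := by
      intro a b p
      induction p with
      | nil => exact le_refl _
      | cons _ e ih => exact le_of_lt (lt_of_le_of_lt ih (height_lt e))
    refine ⟨Classical.inhabited_of_nonempty (ex _ b rfl), ?_⟩
    have : ∀ p q : Path r b, p = q := by
      intro p q
      induction p with
      | nil =>
        rcases q with _ | ⟨q, f⟩
        · rfl
        · exact False.elim (lt_irrefl _ (lt_of_le_of_lt (height_le q) (height_lt f)))
      | cons p e ih =>
        rcases q with _ | ⟨q, f⟩
        · exact False.elim (lt_irrefl _ (lt_of_le_of_lt (height_le p) (height_lt e)))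
        · rcases unique_arrow e f with ⟨⟨⟩, ⟨⟩⟩
          rw [ih]
    intro p
    exact this p _

open CategoryTheory.SingleObj in
/-- Copy of `IsFreeGroupoid.SpanningTree.endIsFree`, producing the basis as data. -/
noncomputable def endBasis {G : Type u} [Groupoid.{u} G] [IsFreeGroupoid G]
    (T : WideSubquiver (Symmetrify <| Generators G)) [Quiver.Arborescence T] :
    FreeGroupBasis ((wideSubquiverEquivSetTotal <| wideSubquiverSymmetrify T)ᶜ : Set _)
      (CategoryTheory.End (show G from Quiver.root T)) :=
  FreeGroupBasis.ofUniqueLift _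
    (fun e => SpanningTree.loopOfHom T (of e.val.hom))
    (by
      intro X _ f
      let f' : Labelling (Generators G) X := fun a b e =>
        if h : e ∈ wideSubquiverSymmetrify T a b then 1 else f ⟨⟨a, b, e⟩, h⟩
      rcases unique_lift f' with ⟨F', hF', uF'⟩
      refine ⟨F'.mapEnd _, ?_, ?_⟩
      · suffices ∀ {x y} (q : x ⟶ y), F'.map (SpanningTree.loopOfHom T q) = (F'.map q : X) by
          rintro ⟨⟨a, b, e⟩, h⟩
          erw [Functor.mapEnd_apply, this, hF']
          exact dif_neg h
        intros x y q
        suffices ∀ {a} (p : Quiver.Path (Quiver.root T) a),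
            F'.map (SpanningTree.homOfPath T p) = 1 by
          simp only [SpanningTree.treeHom, comp_as_mul, inv_as_inv,
            SpanningTree.loopOfHom, inv_one, mul_one,
            one_mul, Functor.map_inv, Functor.map_comp]
          erw [this, this]; rw [inv_one, mul_one, one_mul]
        intro a p
        induction' p with b c p e ih
        · exact F'.map_id _
        erw [F'.map_comp, comp_as_mul, ih, mul_one]
        rcases e with ⟨e | e, eT⟩
        · exact (hF' _ _ e).trans (dif_pos (Or.inl eT))
        · erw [F'.map_inv, inv_as_inv, inv_eq_one]
          exact (hF' _ _ e).trans (dif_pos (Or.inr eT))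
      · intro E hE
        ext x
        have hroot : SpanningTree.treeHom T (show G from Quiver.root T) = 𝟙 _ :=
          SpanningTree.treeHom_root T
        have hfun : SpanningTree.functorOfMonoidHom T E = F' := by
          apply uF'
          intro a b e
          change E (SpanningTree.loopOfHom T _) = dite _ _ _
          split_ifs with h
          · rw [SpanningTree.loopOfHom_eq_id T e h]
            exact E.map_one
          · exact hE ⟨⟨a, b, e⟩, h⟩
        have h1 : E (SpanningTree.loopOfHom T x) = F'.map x := by
          rw [← hfun]; rfl
        show E x = F'.map x
        have h3 : SpanningTree.loopOfHom T x = SpanningTree.treeHom T _ ≫ x ≫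
            CategoryTheory.inv (SpanningTree.treeHom T (show G from Quiver.root T)) := rfl
        have h4 : SpanningTree.loopOfHom T x = x := by
          rw [h3]; erw [hroot, IsIso.inv_id, Category.id_comp]
          exact Category.comp_id x
        rw [← h1, h4])

lemma endBasis_apply {G : Type u} [Groupoid.{u} G] [IsFreeGroupoid G]
    (T : WideSubquiver (Symmetrify <| Generators G)) [Quiver.Arborescence T]
    (e : ((wideSubquiverEquivSetTotal <| wideSubquiverSymmetrify T)ᶜ : Set _)) :
    endBasis T e = SpanningTree.loopOfHom T (of e.val.hom) := by
  show (FreeGroup.lift fun e => SpanningTree.loopOfHom T (of e.val.hom)) (FreeGroup.of e) = _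
  rw [FreeGroup.lift_apply_of]

section D

variable {α β : Type u} (K : Subgroup (FreeGroup (α ⊕ β)))

local notation "Fs" => FreeGroup (α ⊕ β)

/-- the free factor generated by the left-hand letters -/
def H0 : Subgroup (FreeGroup (α ⊕ β)) := (FreeGroup.map (@Sum.inl α β)).range

local notation "Q" => FreeGroup (α ⊕ β) ⧸ K

local notation "G" => ActionCategory Fs Q

/-- The free groupoid structure on the action groupoid, with the *standard*
generators of the free group as labels (rather than the unknown generators coming
from the `IsFreeGroup` instance). This is a copy of `actionGroupoidIsFree`. -/
instance (priority := 2000) myFreeGroupoid : IsFreeGroupoid G where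
  quiverGenerators :=
    ⟨fun a b => { e : α ⊕ β // FreeGroup.of e • a.back = b.back }⟩
  of := fun e => ⟨FreeGroup.of e.val, e.property⟩
  unique_lift := by
    intro X _ f
    let f' : (α ⊕ β) → (Q → X) ⋊[mulAutArrow] Fs := fun e =>
      ⟨fun b => @f ⟨(), _⟩ ⟨(), b⟩ ⟨e, smul_inv_smul _ b⟩, FreeGroup.of e⟩
    have uf : ∃! F' : Fs →* (Q → X) ⋊[mulAutArrow] Fs,
        ∀ a, F' (FreeGroup.of a) = f' a := by
      refine ⟨FreeGroup.lift f', fun a => FreeGroup.lift_apply_of, ?_⟩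
      intro F hF
      ext a
      · simp [hF, FreeGroup.lift_apply_of]
      · rw [hF, FreeGroup.lift_apply_of]
    rcases uf with ⟨F', hF', uF'⟩
    refine ⟨uncurry F' ?_, ?_, ?_⟩
    · suffices SemidirectProduct.rightHom.comp F' = MonoidHom.id _ by
        exact DFunLike.ext_iff.mp this
      apply FreeGroup.ext_hom
      intro x
      rw [MonoidHom.comp_apply, hF']
      rfl
    · rintro ⟨⟨⟩, a : Q⟩ ⟨⟨⟩, b⟩ ⟨e, h : FreeGroup.of e • a = b⟩
      change (F' (FreeGroup.of _)).left _ = _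
      rw [hF']
      cases inv_smul_eq_iff.mpr h.symm
      rfl
    · intro E hE
      have : curry E = F' := by
        apply uF'
        intro e
        ext
        · exact hE _ _ ⟨e, smul_inv_smul _ _⟩
        · rfl
      apply Functor.hext
      · intro
        apply Unit.ext
      · refine ActionCategory.cases ?_
        intros
        subst this
        rfl

instance (priority := high) actCat : Category (ActionCategory Fs Q) := Groupoid.toCategory

instance actIsIso {a b : ActionCategory Fs Q} (f : a ⟶ b) : IsIso f := IsIso.of_groupoid f

/-- the basepoint -/
def base : ActionCategory Fs Q := ⟨(), ((1 : Fs) : Q)⟩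

/-- label of an arrow of the symmetrified generating quiver -/
def slab : ∀ {a b : Symmetrify (Generators G)}, (a ⟶ b) → (α ⊕ β)
  | _, _, Sum.inl e => e.val
  | _, _, Sum.inr e => e.val

/-- an arrow is red if its label is a left-hand letter -/
def IsRed {a b : Symmetrify (Generators G)} (e : a ⟶ b) : Prop :=
  ∃ x : α, slab K e = Sum.inl x

/-- type synonym carrying the red subquiver -/
def RedQ : Type u := ActionCategory Fs Q

instance : Quiver (RedQ K) :=
  ⟨fun a b => { e : @Quiver.Hom (Symmetrify (Generators G)) _ a b // IsRed K e }⟩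

/-- the red component of the basepoint -/
def R' : Set (ActionCategory Fs Q) :=
  { v | Nonempty (@Path (RedQ K) _ (show RedQ K from base K) (show RedQ K from v)) }

lemma base_mem_R' : base K ∈ R' K := ⟨Path.nil⟩

lemma R'_extend {a b : ActionCategory Fs Q}
    (ha : a ∈ R' K) (e : @Quiver.Hom (Symmetrify (Generators G)) _ a b)
    (he : IsRed K e) : b ∈ R' K := by
  rcases ha with ⟨p⟩
  exact ⟨p.cons (⟨e, he⟩ : @Quiver.Hom (RedQ K) _ a b)⟩

/-- quiver structure on the red component -/
instance : Quiver (R' K) :=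
  ⟨fun a b => @Quiver.Hom (RedQ K) _ (show RedQ K from a.val) (show RedQ K from b.val)⟩

/-- the basepoint of the red component -/
def rbase : R' K := ⟨base K, base_mem_R' K⟩

instance rootedConnR : RootedConnected (rbase K) := by
  constructor
  intro b
  have key : ∀ (v : RedQ K) (p : @Path (RedQ K) _ (show RedQ K from base K) v)
      (h : (show ActionCategory Fs Q from v) ∈ R' K),
      Nonempty (Path (rbase K) (⟨v, h⟩ : R' K)) := by
    intro v p
    induction p with
    | nil => intro h; exact ⟨Path.nil⟩
    | cons p e ih =>
        intro h
        rcases ih ⟨p⟩ with ⟨q⟩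
        exact ⟨q.cons e⟩
  rcases b with ⟨v, hv⟩
  rcases hv with ⟨p⟩
  exact key v p ⟨p⟩

/-- connectivity of the action groupoid, for the global geodesic tree -/
instance conn : IsConnected (ActionCategory Fs Q) := by
  exact ActionCategory.instIsConnectedOfIsPretransitiveOfNonempty

instance rootedConnG : RootedConnected (show Symmetrify (Generators G) from base K) :=
  @generators_connected _ _ (conn K) _ (base K)

/-- the adapted spanning tree: geodesic inside the red component of the basepoint,
extended by a global geodesic tree outside of it -/
def T : WideSubquiver (Symmetrify (Generators G)) := fun a b =>
  { e | (∃ (ha : (show ActionCategory Fs Q from a) ∈ R' K)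
            (hb : (show ActionCategory Fs Q from b) ∈ R' K) (hred : IsRed K e),
          (⟨e, hred⟩ : (⟨a, ha⟩ : R' K) ⟶ ⟨b, hb⟩) ∈ geodesicSubtree (rbase K) ⟨a, ha⟩ ⟨b, hb⟩)
      ∨ ((show ActionCategory Fs Q from b) ∉ R' K ∧
          e ∈ geodesicSubtree (show Symmetrify (Generators G) from base K) a b) }

/-- height function for the arborescence property of `T` -/
def ht (v : Symmetrify (Generators G)) : ℕ ×ₗ ℕ :=
  if h : (show ActionCategory Fs Q from v) ∈ R' K
  then toLex (0, (shortestPath (rbase K) ⟨v, h⟩).length)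
  else toLex (1, (shortestPath (show Symmetrify (Generators G) from base K) v).length)

lemma path_cons_of_length_ne_zero {V : Type*} [Quiver V] {r v : V} (p : Quiver.Path r v)
    (h : p.length ≠ 0) : ∃ (c : V) (q : Quiver.Path r c) (f : c ⟶ v), p = q.cons f := by
  cases p with
  | nil => exact absurd rfl h
  | cons q f => exact ⟨_, q, f, rfl⟩

instance arbT : Quiver.Arborescence (T K) := by
  refine arbMk (show Symmetrify (Generators G) from base K) (ht K) ?_ ?_ ?_
  · rintro a b ⟨e, he⟩
    rcases he with ⟨ha, hb, hred, p, hp⟩ | ⟨hb, p, hp⟩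
    · unfold ht; rw [dif_pos ha, dif_pos hb]
      rw [Prod.Lex.lt_iff]
      right
      refine ⟨rfl, ?_⟩
      calc (shortestPath (rbase K) ⟨a, ha⟩).length ≤ p.length := shortest_path_spec _ p
      _ < p.length + 1 := Nat.lt_succ_self _
      _ = _ := by rw [hp]; rfl
    · unfold ht; rw [dif_neg hb]
      by_cases ha : (show ActionCategory Fs Q from a) ∈ R' K
      · rw [dif_pos ha, Prod.Lex.lt_iff]
        left; exact Nat.zero_lt_one
      · rw [dif_neg ha, Prod.Lex.lt_iff]
        right
        refine ⟨rfl, ?_⟩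
        calc (shortestPath (show Symmetrify (Generators G) from base K) a).length
            ≤ p.length := shortest_path_spec _ p
        _ < p.length + 1 := Nat.lt_succ_self _
        _ = _ := by rw [hp]; rfl
  · rintro a b c ⟨e, he⟩ ⟨f, hf⟩
    rcases he with ⟨ha, hc, hrede, p, hp⟩ | ⟨hcn, p, hp⟩ <;>
      rcases hf with ⟨hb, hc', hredf, q, hq⟩ | ⟨hcn', q, hq⟩
    · have hpq := hp.symm.trans hq
      have hab : (⟨a, ha⟩ : R' K) = ⟨b, hb⟩ := Quiver.Path.obj_eq_of_cons_eq_cons hpq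
      have hab' : a = b := congrArg Subtype.val hab
      subst hab'
      have hef : (⟨e, hrede⟩ : (⟨a, ha⟩ : R' K) ⟶ ⟨c, hc⟩) = ⟨f, hredf⟩ :=
        eq_of_heq (Quiver.Path.hom_heq_of_cons_eq_cons hpq)
      have hef' : e = f := congrArg Subtype.val hef
      subst hef'
      exact ⟨rfl, heq_of_eq (Subtype.ext rfl)⟩
    · exact absurd hc hcn'
    · exact absurd hc' hcn
    · have hpq := hp.symm.trans hq
      have hab : a = b := Quiver.Path.obj_eq_of_cons_eq_cons
        (V := Symmetrify (Generators (ActionCategory Fs (FreeGroup (α ⊕ β) ⧸ K)))) hpq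
      subst hab
      have hef : e = f := eq_of_heq (Quiver.Path.hom_heq_of_cons_eq_cons
        (V := Symmetrify (Generators (ActionCategory Fs (FreeGroup (α ⊕ β) ⧸ K)))) hpq)
      subst hef
      exact ⟨rfl, heq_of_eq (Subtype.ext rfl)⟩
  · intro b
    by_cases hb : (show ActionCategory Fs Q from b) ∈ R' K
    · by_cases hlen : (shortestPath (rbase K) ⟨b, hb⟩).length = 0
      · left
        have := Quiver.Path.eq_of_length_zero (shortestPath (rbase K) ⟨b, hb⟩) hlen
        exact (congrArg Subtype.val this).symm
      · right
        obtain ⟨c, q, f, hp⟩ := path_cons_of_length_ne_zero _ hlen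
        refine ⟨c.val, ⟨⟨f.val, Or.inl ⟨c.2, hb, f.2, ?_⟩⟩⟩⟩
        exact ⟨q, by rw [hp]; rfl⟩
    · by_cases hlen : (shortestPath (show Symmetrify (Generators G) from base K) b).length = 0
      · exact absurd (Quiver.Path.eq_of_length_zero _ hlen ▸ base_mem_R' K) hb
      · right
        obtain ⟨c, q, f, hp⟩ := path_cons_of_length_ne_zero _ hlen
        exact ⟨c, ⟨⟨f, Or.inr ⟨hb, ⟨q, hp⟩⟩⟩⟩⟩

instance ofIsIso {a b : Generators (ActionCategory Fs Q)} (e : a ⟶ b) :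
    IsIso (IsFreeGroupoid.of e) := IsIso.of_groupoid _

instance treeHomIsIso (v : ActionCategory Fs Q) :
    IsIso (SpanningTree.treeHom (T K) v) := IsIso.of_groupoid _

/-- the underlying group element of a morphism in the action groupoid -/
def mval {a b : ActionCategory Fs Q} (f : a ⟶ b) : FreeGroup (α ⊕ β) := f.val

lemma mval_comp {a b c : ActionCategory Fs Q} (f : a ⟶ b) (g : b ⟶ c) :
    mval K (f ≫ g) = mval K g * mval K f := ActionCategory.comp_val f g

lemma mval_id (a : ActionCategory Fs Q) : mval K (𝟙 a) = 1 := rfl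

/-- value of the canonical tree morphism to a vertex -/
def tval (v : ActionCategory Fs Q) : FreeGroup (α ⊕ β) :=
  mval K (SpanningTree.treeHom (T K) v)

lemma inv_val {a b : ActionCategory Fs Q} (f : a ⟶ b) :
    mval K (CategoryTheory.inv f) = (mval K f)⁻¹ := by
  have h : f ≫ CategoryTheory.inv f = 𝟙 a := IsIso.hom_inv_id f
  have h2 : mval K (CategoryTheory.inv f) * mval K f = 1 := by
    rw [← mval_comp, h, mval_id]
  exact eq_inv_of_mul_eq_one_left h2

lemma tval_base : tval K (base K) = 1 := by
  have h1 : SpanningTree.treeHom (T K) (base K) = 𝟙 (base K) :=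
    SpanningTree.treeHom_root (T K)
  rw [tval, h1]; exact mval_id K _

lemma tval_mem_H0 : ∀ (n : ℕ) (v : ActionCategory Fs Q) (hv : v ∈ R' K),
    (shortestPath (rbase K) ⟨v, hv⟩).length = n → tval K v ∈ (H0 : Subgroup Fs) := by
  intro n
  induction n using Nat.strong_induction_on with
  | _ n ih =>
    intro v hv hlen
    by_cases h0 : n = 0
    · subst h0
      have h1 : rbase K = ⟨v, hv⟩ := Quiver.Path.eq_of_length_zero _ hlen
      have hvb : base K = v := congrArg Subtype.val h1
      rw [← hvb]
      rw [tval_base]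
      exact one_mem _
    · obtain ⟨c, q, f, hp⟩ := path_cons_of_length_ne_zero _ (by rw [hlen]; exact h0)
      have hTf : f.val ∈ T K c.val v := Or.inl ⟨c.2, hv, f.2, ⟨q, by rw [hp]; rfl⟩⟩
      have htv : SpanningTree.treeHom (T K) v
          = SpanningTree.treeHom (T K) c.val ≫
            (Sum.recOn (⟨f.val, hTf⟩ : @Quiver.Hom (T K) _ c.val v).val
              (fun e => IsFreeGroupoid.of e) (fun e => CategoryTheory.inv (IsFreeGroupoid.of e) (I := IsIso.of_groupoid _))) := by
        rw [SpanningTree.treeHom_eq (T K)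
          ((default : Quiver.Path (Quiver.root (T K)) (@id (T K) c.val)).cons ⟨f.val, hTf⟩)]
        rw [SpanningTree.homOfPath]
        rfl
      have hmem_c : tval K c.val ∈ (H0 : Subgroup Fs) := by
        refine ih (shortestPath (rbase K) ⟨c.val, c.2⟩).length ?_ c.val c.2 rfl
        have h4 : (shortestPath (rbase K) ⟨c.val, c.2⟩).length ≤ q.length := by
          have := shortest_path_spec (rbase K) q
          simpa using this
        have h5 : n = q.length + 1 := by rw [← hlen, hp]; rfl
        omega
      have hedge : mval K (Sum.recOn (⟨f.val, hTf⟩ : @Quiver.Hom (T K) _ c.val v).val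
              (fun e => IsFreeGroupoid.of e)
              (fun e => CategoryTheory.inv (IsFreeGroupoid.of e) (I := IsIso.of_groupoid _)) :
            (show ActionCategory Fs Q from c.val) ⟶ v) ∈ (H0 : Subgroup Fs) := by
        obtain ⟨x, hx⟩ := f.2
        rcases hfv : f.val with e' | e'
        · have : e'.val = Sum.inl x := by rw [← hx, hfv]; rfl
          show mval K (IsFreeGroupoid.of e') ∈ (H0 : Subgroup Fs)
          have hval : mval K (IsFreeGroupoid.of e' :
              (show ActionCategory Fs Q from c.val) ⟶ v) = FreeGroup.of e'.val := rfl
          rw [hval, this]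
          exact ⟨FreeGroup.of x, by rw [FreeGroup.map.of]⟩
        · have : e'.val = Sum.inl x := by rw [← hx, hfv]; rfl
          show mval K (CategoryTheory.inv (IsFreeGroupoid.of e') (I := IsIso.of_groupoid _)) ∈ (H0 : Subgroup Fs)
          rw [inv_val]
          refine inv_mem ?_
          have hval : mval K (IsFreeGroupoid.of e' :
              v ⟶ (show ActionCategory Fs Q from c.val)) = FreeGroup.of e'.val := rfl
          rw [hval, this]
          exact ⟨FreeGroup.of x, by rw [FreeGroup.map.of]⟩
      have hcomp : tval K v = mval K (Sum.recOn (⟨f.val, hTf⟩ : @Quiver.Hom (T K) _ c.val v).val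
              (fun e => IsFreeGroupoid.of e)
              (fun e => CategoryTheory.inv (IsFreeGroupoid.of e) (I := IsIso.of_groupoid _)) :
            (show ActionCategory Fs Q from c.val) ⟶ v) * tval K c.val := by
        rw [tval, htv, mval_comp]; rfl
      rw [hcomp]
      exact mul_mem hedge hmem_c


/-- loops attached to tree-complement edges, as values -/
lemma loop_val {a b : ActionCategory Fs Q} (q : a ⟶ b) :
    mval K (SpanningTree.loopOfHom (T K) q)
      = ((tval K b)⁻¹ * mval K q) * tval K a := by
  show mval K (SpanningTree.treeHom (T K) a ≫ q ≫
      CategoryTheory.inv (SpanningTree.treeHom (T K) b)) = _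
  rw [mval_comp, mval_comp, inv_val]
  rfl

/-- total arrows outside the spanning tree: a basis for `K` -/
def ST : Set (Total (Generators G)) :=
  ((wideSubquiverEquivSetTotal <| wideSubquiverSymmetrify (T K))ᶜ : Set _)

/-- the red basis elements: red arrows starting (hence ending) in the red component -/
def pr (s : ST K) : Prop :=
  (∃ x : α, (s.val.hom.val : α ⊕ β) = Sum.inl x) ∧
    (show ActionCategory Fs Q from s.val.left) ∈ R' K

/-- the basis of `End base` -/
def bS : FreeGroupBasis (ST K)
    (CategoryTheory.End (show ActionCategory Fs Q from Quiver.root (T K))) :=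
  endBasis (T K)

/-- end group at the basepoint is `K` -/
def emes : CategoryTheory.End (show ActionCategory Fs Q from Quiver.root (T K)) ≃* K :=
  endMulEquivSubgroup K

/-- the composite: free group on the partitioned basis to the ambient free group -/
def fD : FreeGroup ({s : ST K // pr K s} ⊕ {s : ST K // ¬ pr K s}) →* FreeGroup (α ⊕ β) :=
  (Subgroup.subtype K).comp (((emes K).toMonoidHom.comp
      (bS K).repr.symm.toMonoidHom).comp
    (FreeGroup.freeGroupCongr (Equiv.sumCompl (pr K))).toMonoidHom)

lemma fD_injective : Injective (fD K) := by
  refine K.subtype_injective.comp (((emes K).injective.comp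
    (bS K).repr.symm.injective).comp (FreeGroup.freeGroupCongr (Equiv.sumCompl (pr K))).injective)

lemma fD_range : (fD K).range = K := by
  have hsurj : Surjective ⇑(((emes K).toMonoidHom.comp
      (bS K).repr.symm.toMonoidHom).comp
      (FreeGroup.freeGroupCongr (Equiv.sumCompl (pr K))).toMonoidHom) :=
    ((emes K).surjective.comp (bS K).repr.symm.surjective).comp
      (FreeGroup.freeGroupCongr (Equiv.sumCompl (pr K))).surjective
  rw [fD, FFP.range_comp_of_surjective _ _ hsurj, Subgroup.range_subtype]

lemma fD_gen (s1 : {s : ST K // pr K s}) :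
    fD K (FreeGroup.map Sum.inl (FreeGroup.of s1)) =
      mval K (SpanningTree.loopOfHom (T K) (of s1.val.val.hom)) := by
  rw [FreeGroup.map.of]
  show (Subgroup.subtype K) ((emes K) ((bS K).repr.symm
      ((FreeGroup.freeGroupCongr (Equiv.sumCompl (pr K))) (FreeGroup.of (Sum.inl s1))))) = _
  have h1 : (FreeGroup.freeGroupCongr (Equiv.sumCompl (pr K))) (FreeGroup.of (Sum.inl s1))
      = FreeGroup.of s1.val := by
    show FreeGroup.map _ (FreeGroup.of _) = _
    rw [FreeGroup.map.of, Equiv.sumCompl_apply_inl]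
  rw [h1]
  have h2 : (bS K).repr.symm (FreeGroup.of s1.val) = (bS K) s1.val := rfl
  rw [h2]
  have h3 : (bS K) s1.val = SpanningTree.loopOfHom (T K) (of s1.val.val.hom) :=
    endBasis_apply (T K) s1.val
  rw [h3]
  rfl

/-- the subgroup generated by the red part of the basis -/
def AA : Subgroup (FreeGroup (α ⊕ β)) := ((fD K).comp (FreeGroup.map Sum.inl)).range

lemma redloop_mem (s : ST K) (hs : pr K s) :
    mval K (SpanningTree.loopOfHom (T K) (of s.val.hom)) ∈ (H0 : Subgroup Fs) := by
  obtain ⟨⟨x, hx⟩, hleft⟩ := hs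
  have hright : (show ActionCategory Fs Q from s.val.right) ∈ R' K :=
    R'_extend K hleft (Sum.inl s.val.hom) ⟨x, hx⟩
  erw [loop_val]
  refine mul_mem (mul_mem (inv_mem ?_) ?_) ?_
  · exact tval_mem_H0 K _ _ hright rfl
  · have hval : mval K (of s.val.hom :
        (show ActionCategory Fs Q from s.val.left) ⟶ (show ActionCategory Fs Q from s.val.right))
        = FreeGroup.of s.val.hom.val := rfl
    rw [hval, hx]
    exact ⟨FreeGroup.of x, by rw [FreeGroup.map.of]⟩
  · exact tval_mem_H0 K _ _ hleft rfl

lemma R'_invariant : ∀ (g0 : FreeGroup α) (v : ActionCategory Fs Q), v ∈ R' K →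
    ((FreeGroup.map (@Sum.inl α β) g0 • v.back : Q) : ActionCategory Fs Q) ∈ R' K := by
  intro g0
  refine FreeGroup.induction_on (C := fun g0 => ∀ v : ActionCategory Fs Q, v ∈ R' K →
    ((FreeGroup.map (@Sum.inl α β) g0 • v.back : Q) : ActionCategory Fs Q) ∈ R' K) g0 ?_ ?_ ?_ ?_
  · intro v hv
    rw [map_one, one_smul, ActionCategory.back_coe]
    exact hv
  · intro x v hv
    have hof : (FreeGroup.map (@Sum.inl α β) (FreeGroup.of x : FreeGroup α)) = FreeGroup.of (@Sum.inl α β x) :=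
      FreeGroup.map.of
    rw [hof]
    exact R'_extend K hv
      (Sum.inl (⟨Sum.inl x, rfl⟩ :
        (show Generators (ActionCategory Fs Q) from v) ⟶
        (show Generators (ActionCategory Fs Q) from
          ((FreeGroup.of (@Sum.inl α β x) • v.back : Q) : ActionCategory Fs Q)))) ⟨x, rfl⟩
  · intro x _ v hv
    have hof : (FreeGroup.map (@Sum.inl α β) (FreeGroup.of x : FreeGroup α)⁻¹)
        = (FreeGroup.of (@Sum.inl α β x))⁻¹ := by
      rw [map_inv]
      rw [show (FreeGroup.map (@Sum.inl α β) (FreeGroup.of x : FreeGroup α)) = FreeGroup.of (@Sum.inl α β x) from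
        FreeGroup.map.of]
    rw [hof]
    refine R'_extend K hv
      (Sum.inr (⟨Sum.inl x, ?_⟩ :
        (show Generators (ActionCategory Fs Q) from
          (((FreeGroup.of (@Sum.inl α β x))⁻¹ • v.back : Q) : ActionCategory Fs Q)) ⟶
        (show Generators (ActionCategory Fs Q) from v))) ⟨x, rfl⟩
    show FreeGroup.of (@Sum.inl α β x) • ((FreeGroup.of (@Sum.inl α β x))⁻¹ • v.back) = v.back
    exact smul_inv_smul _ _
  · intro g h ihg ihh v hv
    have h1 := ihg (((FreeGroup.map (@Sum.inl α β) h • v.back : Q) : ActionCategory Fs Q))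
      (ihh v hv)
    rw [ActionCategory.coe_back] at h1
    rw [map_mul, mul_smul]
    exact h1

lemma c_mem : ∀ (g0 : FreeGroup α) (v : ActionCategory Fs Q), v ∈ R' K →
    ((tval K ((FreeGroup.map (@Sum.inl α β) g0 • v.back : Q) : ActionCategory Fs Q))⁻¹ *
      FreeGroup.map Sum.inl g0) * tval K v ∈ AA K := by
  intro g0
  refine FreeGroup.induction_on (C := fun g0 => ∀ v : ActionCategory Fs Q, v ∈ R' K →
    ((tval K ((FreeGroup.map (@Sum.inl α β) g0 • v.back : Q) : ActionCategory Fs Q))⁻¹ *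
      FreeGroup.map (@Sum.inl α β) g0) * tval K v ∈ AA K) g0 ?_ ?_ ?_ ?_
  · intro v hv
    rw [map_one, one_smul, ActionCategory.back_coe]
    have : ((tval K v)⁻¹ * 1) * tval K v = 1 := by group
    rw [this]
    exact one_mem _
  · intro x v hv
    have hof : (FreeGroup.map (@Sum.inl α β) (FreeGroup.of x : FreeGroup α)) = FreeGroup.of (@Sum.inl α β x) :=
      FreeGroup.map.of
    rw [hof]
    set b : ActionCategory Fs Q := ((FreeGroup.of (@Sum.inl α β x) • v.back : Q) : ActionCategory Fs Q)
      with hb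
    let e : (show Generators (ActionCategory Fs Q) from v) ⟶
        (show Generators (ActionCategory Fs Q) from b) := ⟨Sum.inl x, rfl⟩
    have hexpr : ((tval K b)⁻¹ * FreeGroup.of (@Sum.inl α β x)) * tval K v
        = mval K (SpanningTree.loopOfHom (T K) (of e)) := by
      erw [loop_val]
      rfl
    rw [hexpr]
    by_cases hmem : e ∈ wideSubquiverSymmetrify (T K) v b
    · rw [SpanningTree.loopOfHom_eq_id (T K) e hmem]
      exact one_mem (AA K)
    · have hS : (⟨v, b, e⟩ : Total (Generators (ActionCategory Fs Q))) ∈ ST K := hmem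
      have hpr : pr K ⟨⟨v, b, e⟩, hS⟩ := ⟨⟨x, rfl⟩, hv⟩
      refine ⟨FreeGroup.of (⟨⟨⟨v, b, e⟩, hS⟩, hpr⟩ : {s : ST K // pr K s}), ?_⟩
      show fD K (FreeGroup.map Sum.inl (FreeGroup.of _)) = _
      exact fD_gen K _
  · intro x ihx v hv
    have hof : (FreeGroup.map (@Sum.inl α β) (FreeGroup.of x : FreeGroup α)) = FreeGroup.of (@Sum.inl α β x) :=
      FreeGroup.map.of
    have hWmem : ((((FreeGroup.of (@Sum.inl α β x) : FreeGroup (α ⊕ β)))⁻¹ • v.back : Q) :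
        ActionCategory Fs Q) ∈ R' K := by
      have := R'_invariant K (FreeGroup.of x)⁻¹ v hv
      rwa [map_inv, show (FreeGroup.map (@Sum.inl α β) (FreeGroup.of x)) = FreeGroup.of (@Sum.inl α β x) from
        FreeGroup.map.of] at this
    have hmain := ihx ((((FreeGroup.of (@Sum.inl α β x))⁻¹ • v.back : Q) : ActionCategory Fs Q)) hWmem
    rw [hof] at hmain
    rw [map_inv, hof]
    have hb : (FreeGroup.of (@Sum.inl α β x)) •
        (ActionCategory.back ((((FreeGroup.of (@Sum.inl α β x))⁻¹ • v.back : Q) :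
          ActionCategory Fs Q))) = v.back := by
      show FreeGroup.of (@Sum.inl α β x) • ((FreeGroup.of (@Sum.inl α β x))⁻¹ • v.back) = v.back
      exact smul_inv_smul _ _
    rw [hb] at hmain
    have hv2 : (((v.back : Q)) : ActionCategory Fs Q) = v := ActionCategory.back_coe v
    rw [hv2] at hmain
    have heq : (tval K ((((FreeGroup.of (@Sum.inl α β x))⁻¹ • v.back : Q) :
          ActionCategory Fs Q)))⁻¹ * (FreeGroup.of (@Sum.inl α β x))⁻¹ * tval K v
        = ((tval K v)⁻¹ * FreeGroup.of (@Sum.inl α β x) *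
          tval K ((((FreeGroup.of (@Sum.inl α β x))⁻¹ • v.back : Q) :
            ActionCategory Fs Q)))⁻¹ := by
      group
    rw [heq]
    exact inv_mem hmain
  · intro g h ihg ihh v hv
    have hWmem := R'_invariant K h v hv
    have h1 := ihg (((FreeGroup.map (@Sum.inl α β) h • v.back : Q) : ActionCategory Fs Q)) hWmem
    rw [ActionCategory.coe_back] at h1
    have h2 := ihh v hv
    rw [map_mul]
    have heq : ((tval K (((FreeGroup.map (@Sum.inl α β) g * FreeGroup.map (@Sum.inl α β) h) • v.back : Q) :
          ActionCategory Fs Q))⁻¹ * (FreeGroup.map (@Sum.inl α β) g * FreeGroup.map (@Sum.inl α β) h))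
          * tval K v
        = (((tval K ((FreeGroup.map (@Sum.inl α β) g • (FreeGroup.map (@Sum.inl α β) h • v.back) : Q) :
          ActionCategory Fs Q))⁻¹ * FreeGroup.map Sum.inl g)
            * tval K ((FreeGroup.map (@Sum.inl α β) h • v.back : Q) : ActionCategory Fs Q))
          * (((tval K ((FreeGroup.map (@Sum.inl α β) h • v.back : Q) : ActionCategory Fs Q))⁻¹
            * FreeGroup.map Sum.inl h) * tval K v) := by
      rw [mul_smul]
      group
    rw [heq]
    exact mul_mem h1 h2

lemma AA_le : AA K ≤ (H0 : Subgroup Fs) ⊓ K := by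
  rintro g ⟨y, rfl⟩
  constructor
  · show ((fD K).comp (FreeGroup.map Sum.inl)) y ∈ (H0 : Subgroup Fs)
    refine FreeGroup.induction_on (C := fun y => ((fD K).comp (FreeGroup.map Sum.inl)) y
      ∈ (H0 : Subgroup Fs)) y ?_ ?_ ?_ ?_
    · show ((fD K).comp (FreeGroup.map Sum.inl)) (1 : FreeGroup {s : ST K // pr K s})
          ∈ (H0 : Subgroup Fs)
      rw [map_one]; exact one_mem _
    · intro s1
      show ((fD K).comp (FreeGroup.map Sum.inl)) (pure s1) ∈ (H0 : Subgroup Fs)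
      have h1 : ((fD K).comp (FreeGroup.map Sum.inl)) (pure s1)
          = mval K (SpanningTree.loopOfHom (T K) (of s1.val.val.hom)) := fD_gen K s1
      rw [h1]
      exact redloop_mem K s1.val s1.prop
    · intro s1 hs1
      show ((fD K).comp (FreeGroup.map Sum.inl)) ((pure s1 : FreeGroup _))⁻¹
          ∈ (H0 : Subgroup Fs)
      rw [map_inv]
      exact inv_mem hs1
    · intro y z hy hz
      show ((fD K).comp (FreeGroup.map Sum.inl)) (y * z) ∈ (H0 : Subgroup Fs)
      rw [map_mul]
      exact mul_mem hy hz
  · have : ((fD K).comp (FreeGroup.map Sum.inl)) y ∈ (fD K).range :=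
      ⟨FreeGroup.map Sum.inl y, rfl⟩
    rw [fD_range] at this
    exact this

lemma le_AA : (H0 : Subgroup Fs) ⊓ K ≤ AA K := by
  rintro g ⟨hg0, hgK⟩
  obtain ⟨g0, rfl⟩ := hg0
  have hmain := c_mem K g0 (base K) (base_mem_R' K)
  have hback : ActionCategory.back (base K) = ((1 : Fs) : Q) := rfl
  rw [hback] at hmain
  have hcoset : (FreeGroup.map (@Sum.inl α β) g0 • ((1 : Fs) : Q)) = ((1 : Fs) : Q) := by
    rw [MulAction.Quotient.smul_coe, smul_eq_mul, mul_one]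
    exact QuotientGroup.eq.mpr (by rw [mul_one]; exact inv_mem hgK)
  rw [hcoset] at hmain
  have h5 : tval K ((((1 : Fs) : Q)) : ActionCategory Fs Q) = 1 := tval_base K
  rw [h5] at hmain
  have h6 : tval K (base K) = 1 := tval_base K
  rw [h6] at hmain
  rwa [inv_one, one_mul, mul_one] at hmain

lemma AA_eq : ((fD K).comp (FreeGroup.map Sum.inl)).range = (H0 : Subgroup Fs) ⊓ K :=
  le_antisymm (AA_le K) (le_AA K)

/-- Lemma D: intersecting with the subgroup generated by the left-hand letters
gives a free factor of any subgroup of a free group on a sum. -/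
theorem lemD : IsFreeFactor ((H0 : Subgroup Fs) ⊓ K) K := by
  have main := FFP.isFreeFactor_of_basis_sum (fD K) (fD_injective K)
  rw [AA_eq, fD_range] at main
  exact main

end D

end FFP2

/-- If `H` is a free factor of `J` and `K ≤ J`, then `H ∩ K` is a free factor of `K`. -/
theorem inf_free_factor_of_le (k : ℕ) (H K J : Subgroup (FreeGroup (Fin k)))
    (hHJ : IsFreeFactor H J) (hKJ : K ≤ J) :
    IsFreeFactor (H ⊓ K) K := by
  obtain ⟨hHle, H', hH'le, hinj, hrange⟩ := hHJ
  set gH : FreeGroup (IsFreeGroup.Generators ↥H) ≃* ↥H := IsFreeGroup.mulEquiv ↥H with hgH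
  set gH' : FreeGroup (IsFreeGroup.Generators ↥H') ≃* ↥H' := IsFreeGroup.mulEquiv ↥H' with hgH'
  set ψ : FreeGroup (IsFreeGroup.Generators ↥H ⊕ IsFreeGroup.Generators ↥H') →*
      FreeGroup (Fin k) :=
    (Monoid.Coprod.lift H.subtype H'.subtype).comp
      ((Monoid.Coprod.map gH.toMonoidHom gH'.toMonoidHom).comp FFP.ofSum) with hψ
  have hsurj2 : Function.Surjective
      ⇑((Monoid.Coprod.map gH.toMonoidHom gH'.toMonoidHom).comp FFP.ofSum) := by
    rw [MonoidHom.coe_comp]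
    exact (FFP.map_equiv_bijective gH gH').surjective.comp FFP.ofSum_bijective.surjective
  have ψinj : Function.Injective ψ := fun x y h =>
    FFP.ofSum_bijective.injective ((FFP.map_equiv_bijective gH gH').injective (hinj h))
  have hψrange : ψ.range = J := by
    rw [hψ, FFP.range_comp_of_surjective _ _ hsurj2, hrange]
  have hψinl : ψ.comp (FreeGroup.map Sum.inl) = H.subtype.comp gH.toMonoidHom := by
    apply FreeGroup.ext_hom
    intro a
    simp [hψ, FFP.ofSum, FreeGroup.lift_apply_of, FreeGroup.map.of]
  have hH0map : (FFP2.H0 (α := IsFreeGroup.Generators ↥H)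
      (β := IsFreeGroup.Generators ↥H')).map ψ = H := by
    rw [FFP2.H0, ← MonoidHom.range_comp, hψinl,
      FFP.range_comp_of_surjective _ _ gH.surjective, Subgroup.range_subtype]
  set K' := K.comap ψ with hK'
  have lemd := FFP2.lemD K'
  have mapped := FFP.IsFreeFactor.map lemd ψ ψinj
  have hm1 : K'.map ψ = K := by
    rw [hK', Subgroup.map_comap_eq, hψrange, inf_eq_right.mpr hKJ]
  have hm2 : ((FFP2.H0 ⊓ K').map ψ) = H ⊓ K := by
    rw [Subgroup.map_inf _ _ ψ ψinj, hH0map, hm1]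
  rw [hm1, hm2] at mapped
  exact mapped
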